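/- arXiv:2106.03585 — 3 statements merged into one kernel-verified Lean document; each statement's English description precedes it below -/
import Mathlib

section
/- Let G = (V, E) be a graph and define its augmented graph G⁺ by adding, for each vertex i ∈ V, a new vertex i_comp and an edge (i, i_comp). Given nonnegative weights ν⁺ on the edges of G⁺ (restricting to weights ν on E), the second smallest eigenvalue of the weighted graph Laplacian of G⁺ satisfies λ₂(Δ_{G⁺}(ν⁺)) ≥ (1/4)·min( λ₂(Δ_G(ν)), min_{i∈V} ν_{i,i_comp} ). -/
open Finset

/-- Weighted graph Laplacian of weights `w` (symmetric, zero on the diagonal). -/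
def lap {V : Type*} [Fintype V] [DecidableEq V] (w : V → V → ℝ) : Matrix V V ℝ :=
  fun i j => if i = j then ∑ k, w i k else - w i j

/-- The second smallest eigenvalue of a graph Laplacian, characterized variationally as the
infimum of the Rayleigh quotient over unit vectors orthogonal to the all-ones vector. -/
noncomputable def lam2 {V : Type*} [Fintype V] (L : Matrix V V ℝ) : ℝ :=
  sInf {r | ∃ x : V → ℝ, (∑ i, x i) = 0 ∧ (∑ i, (x i) ^ 2) = 1 ∧
    r = dotProduct x (L.mulVec x)}


lemma mulVec_lap {V : Type*} [Fintype V] [DecidableEq V] (w : V → V → ℝ)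
    (hdiag : ∀ i, w i i = 0) (x : V → ℝ) (i : V) :
    (lap w).mulVec x i = ∑ j, w i j * (x i - x j) := by
  unfold lap Matrix.mulVec dotProduct
  have : ∀ j : V, (if i = j then ∑ k, w i k else - w i j) * x j
      = (if i = j then ∑ k, w i k else 0) * x j - w i j * x j := by
    intro j
    by_cases h : i = j
    · subst h; simp [hdiag i]
    · simp [h]
  rw [Finset.sum_congr rfl (fun j _ => this j), Finset.sum_sub_distrib]
  simp only [ite_mul, zero_mul, Finset.sum_ite_eq, Finset.mem_univ, if_true]
  rw [Finset.sum_mul, ← Finset.sum_sub_distrib]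
  exact Finset.sum_congr rfl (fun j _ => by ring)

lemma quad_form {V : Type*} [Fintype V] [DecidableEq V] (w : V → V → ℝ)
    (hsymm : ∀ i j, w i j = w j i) (hdiag : ∀ i, w i i = 0) (x : V → ℝ) :
    dotProduct x ((lap w).mulVec x)
      = (1/2) * ∑ i, ∑ j, w i j * (x i - x j)^2 := by
  have h : dotProduct x ((lap w).mulVec x)
      = ∑ i, ∑ j, w i j * (x i * (x i - x j)) := by
    unfold dotProduct
    rw [Finset.sum_congr rfl (fun i _ => by rw [mulVec_lap w hdiag x i])]
    exact Finset.sum_congr rfl (fun i _ => by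
      rw [Finset.mul_sum]
      exact Finset.sum_congr rfl (fun j _ => by ring))
  have h2 : dotProduct x ((lap w).mulVec x)
      = ∑ i, ∑ j, w i j * (x j * (x j - x i)) := by
    rw [h, Finset.sum_comm]
    exact Finset.sum_congr rfl (fun j _ => Finset.sum_congr rfl (fun i _ => by rw [hsymm i j]))
  have key : 2 * dotProduct x ((lap w).mulVec x) = ∑ i, ∑ j, w i j * (x i - x j)^2 := by
    rw [two_mul]; nth_rewrite 1 [h]; rw [h2, ← Finset.sum_add_distrib]
    refine Finset.sum_congr rfl (fun i _ => ?_)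
    rw [← Finset.sum_add_distrib]
    exact Finset.sum_congr rfl (fun j _ => by ring)
  linarith

lemma quad_nonneg {V : Type*} [Fintype V] [DecidableEq V] (w : V → V → ℝ)
    (hsymm : ∀ i j, w i j = w j i) (hdiag : ∀ i, w i i = 0)
    (hnonneg : ∀ i j, 0 ≤ w i j) (x : V → ℝ) :
    0 ≤ dotProduct x ((lap w).mulVec x) := by
  rw [quad_form w hsymm hdiag x]
  have : 0 ≤ ∑ i, ∑ j, w i j * (x i - x j)^2 :=
    Finset.sum_nonneg fun i _ => Finset.sum_nonneg fun j _ =>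
      mul_nonneg (hnonneg i j) (sq_nonneg _)
  linarith

lemma lam2_le {V : Type*} [Fintype V] [DecidableEq V] (w : V → V → ℝ)
    (hsymm : ∀ i j, w i j = w j i) (hdiag : ∀ i, w i i = 0)
    (hnonneg : ∀ i j, 0 ≤ w i j) (y : V → ℝ)
    (h0 : (∑ i, y i) = 0) (h1 : (∑ i, (y i)^2) = 1) :
    lam2 (lap w) ≤ dotProduct y ((lap w).mulVec y) := by
  apply csInf_le
  · exact ⟨0, by rintro r ⟨x, -, -, rfl⟩; exact quad_nonneg w hsymm hdiag hnonneg x⟩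
  · exact ⟨y, h0, h1, rfl⟩

lemma rayleigh {V : Type*} [Fintype V] [DecidableEq V] [Nonempty V] (w : V → V → ℝ)
    (hsymm : ∀ i j, w i j = w j i) (hdiag : ∀ i, w i i = 0)
    (hnonneg : ∀ i j, 0 ≤ w i j) (a : V → ℝ) :
    lam2 (lap w) * ∑ i, (a i - (∑ j, a j) / (Fintype.card V : ℝ))^2
      ≤ dotProduct a ((lap w).mulVec a) := by
  set n : ℝ := (Fintype.card V : ℝ) with hn
  have hnpos : 0 < n := by
    rw [hn]
    exact_mod_cast Fintype.card_pos
  set m : ℝ := (∑ j, a j) / n with hm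
  set a' : V → ℝ := fun i => a i - m with ha'
  have hsum' : ∑ i, a' i = 0 := by
    simp only [ha', Finset.sum_sub_distrib, Finset.sum_const, card_univ, nsmul_eq_mul, hm, ← hn]
    field_simp
    ring
  have hQ : dotProduct a ((lap w).mulVec a)
      = dotProduct a' ((lap w).mulVec a') := by
    rw [quad_form w hsymm hdiag a, quad_form w hsymm hdiag a']
    congr 1
    refine Finset.sum_congr rfl (fun i _ => Finset.sum_congr rfl (fun j _ => ?_))
    have : a i - a j = a' i - a' j := by simp only [ha']; ring
    rw [this]
  have hSgoal : (∑ i, (a i - (∑ j, a j) / (Fintype.card V : ℝ))^2) = ∑ i, (a' i)^2 := rfl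
  rw [hSgoal, hQ]
  set S : ℝ := ∑ i, (a' i)^2 with hSdef
  have hS0 : 0 ≤ S := Finset.sum_nonneg fun i _ => sq_nonneg _
  rcases eq_or_lt_of_le hS0 with hS | hS
  · rw [← hS, mul_zero]
    exact quad_nonneg w hsymm hdiag hnonneg a'
  · set s : ℝ := Real.sqrt S with hs
    have hspos : 0 < s := Real.sqrt_pos.mpr hS
    have hs2 : s^2 = S := Real.sq_sqrt hS0
    set y : V → ℝ := fun i => a' i / s with hy
    have h0 : (∑ i, y i) = 0 := by
      simp only [hy, ← Finset.sum_div, hsum', zero_div]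
    have h1 : (∑ i, (y i)^2) = 1 := by
      simp only [hy, div_pow, ← Finset.sum_div, hs2, ← hSdef]
      exact div_self (ne_of_gt hS)
    have key := lam2_le w hsymm hdiag hnonneg y h0 h1
    have hsum_eq : (∑ i, ∑ j, w i j * (y i - y j)^2)
        = (∑ i, ∑ j, w i j * (a' i - a' j)^2) / S := by
      rw [Finset.sum_div]
      refine Finset.sum_congr rfl fun i _ => ?_
      rw [Finset.sum_div]
      refine Finset.sum_congr rfl fun j _ => ?_
      have hyd : y i - y j = (a' i - a' j) / s := by
        simp only [hy]
        ring
      rw [hyd, div_pow, hs2]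
      ring
    have hQy : dotProduct y ((lap w).mulVec y)
        = dotProduct a' ((lap w).mulVec a') / S := by
      rw [quad_form w hsymm hdiag y, quad_form w hsymm hdiag a', hsum_eq]
      ring
    rw [hQy] at key
    exact (le_div_iff₀ hS).mp key

theorem lam2_augmented_graph {V : Type*} [Fintype V] [DecidableEq V] [Nonempty V]
    (w : V → V → ℝ) (hsymm : ∀ i j, w i j = w j i) (hdiag : ∀ i, w i i = 0)
    (hnonneg : ∀ i j, 0 ≤ w i j) (hlam2 : 0 < lam2 (lap w))
    (ν : V → ℝ) (hν : ∀ i, 0 < ν i)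
    (wplus : (V ⊕ V) → (V ⊕ V) → ℝ)
    (hw1 : ∀ i j, wplus (Sum.inl i) (Sum.inl j) = w i j)
    (hw2 : ∀ i, wplus (Sum.inl i) (Sum.inr i) = ν i)
    (hw2' : ∀ i, wplus (Sum.inr i) (Sum.inl i) = ν i)
    (hw3 : ∀ i j, i ≠ j → wplus (Sum.inl i) (Sum.inr j) = 0)
    (hw3' : ∀ i j, i ≠ j → wplus (Sum.inr i) (Sum.inl j) = 0)
    (hw4 : ∀ i j, wplus (Sum.inr i) (Sum.inr j) = 0) :
    lam2 (lap wplus) ≥ (1 / 4) * min (lam2 (lap w)) (univ.inf' univ_nonempty ν) := by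
  classical
  set n : ℝ := (Fintype.card V : ℝ) with hn
  have hnpos : 0 < n := by
    rw [hn]; exact_mod_cast Fintype.card_pos
  set νmin := univ.inf' univ_nonempty ν with hνmin
  set c := min (lam2 (lap w)) νmin with hc
  have hcν : ∀ i, c ≤ ν i := fun i =>
    le_trans (min_le_right _ _) (Finset.inf'_le _ (Finset.mem_univ i))
  have hνminpos : 0 < νmin := by
    rw [hνmin]; exact (Finset.lt_inf'_iff _).mpr (fun i _ => hν i)
  have hc0 : 0 < c := lt_min hlam2 hνminpos
  have hsymmp : ∀ p q, wplus p q = wplus q p := by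
    rintro (i|i) (j|j)
    · rw [hw1, hw1, hsymm]
    · by_cases h : i = j
      · subst h; rw [hw2, hw2']
      · rw [hw3 _ _ h, hw3' _ _ (Ne.symm h)]
    · by_cases h : i = j
      · subst h; rw [hw2, hw2']
      · rw [hw3' _ _ h, hw3 _ _ (Ne.symm h)]
    · rw [hw4, hw4]
  have hdiagp : ∀ p, wplus p p = 0 := by
    rintro (i|i)
    · rw [hw1, hdiag]
    · rw [hw4]
  have hnonnegp : ∀ p q, 0 ≤ wplus p q := by
    rintro (i|i) (j|j)
    · rw [hw1]; exact hnonneg i j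
    · by_cases h : i = j
      · subst h; rw [hw2]; exact (hν i).le
      · rw [hw3 _ _ h]
    · by_cases h : i = j
      · subst h; rw [hw2']; exact (hν i).le
      · rw [hw3' _ _ h]
    · rw [hw4]
  rw [ge_iff_le, lam2]
  have i0 : V := Classical.arbitrary V
  apply le_csInf
  · -- nonemptiness of the constraint set
    set s2 : ℝ := (Real.sqrt 2)⁻¹ with hs2def
    have h2 : s2^2 = 1/2 := by
      rw [hs2def, inv_pow, Real.sq_sqrt (by norm_num : (0:ℝ) ≤ 2)]
      norm_num
    set x₀ : V ⊕ V → ℝ := Sum.elim (fun j => if j = i0 then s2 else 0)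
      (fun j => if j = i0 then -s2 else 0) with hx₀
    refine ⟨_, x₀, ?_, ?_, rfl⟩
    · rw [Fintype.sum_sum_type]
      simp [hx₀, Finset.sum_ite_eq']
    · rw [Fintype.sum_sum_type]
      have e1 : ∑ j, (x₀ (Sum.inl j))^2 = s2^2 := by
        simp only [hx₀, Sum.elim_inl, apply_ite (fun t : ℝ => t^2)]
        simp [Finset.sum_ite_eq']
      have e2 : ∑ j, (x₀ (Sum.inr j))^2 = s2^2 := by
        simp only [hx₀, Sum.elim_inr, apply_ite (fun t : ℝ => t^2)]
        simp [Finset.sum_ite_eq']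
      rw [e1, e2, h2]; norm_num
  · rintro r ⟨x, hx0, hx1, rfl⟩
    set a : V → ℝ := fun i => x (Sum.inl i) with ha
    set b : V → ℝ := fun i => x (Sum.inr i) with hb
    rw [Fintype.sum_sum_type] at hx0 hx1
    rw [quad_form wplus hsymmp hdiagp x]
    set T' : ℝ := ∑ i, ν i * (a i - b i)^2 with hT'
    set A : ℝ := ∑ i, ∑ j, w i j * (a i - a j)^2 with hA
    have hsplit : (∑ p, ∑ q, wplus p q * (x p - x q)^2) = A + 2 * T' := by
      rw [Fintype.sum_sum_type]
      have h_l : ∀ i, (∑ q, wplus (Sum.inl i) q * (x (Sum.inl i) - x q)^2)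
          = (∑ j, w i j * (a i - a j)^2) + ν i * (a i - b i)^2 := by
        intro i
        rw [Fintype.sum_sum_type]
        congr 1
        · exact Finset.sum_congr rfl fun j _ => by rw [hw1]
        · rw [Finset.sum_eq_single i]
          · rw [hw2]
          · intro j _ hj
            rw [hw3 _ _ (Ne.symm hj), zero_mul]
          · intro h; exact absurd (Finset.mem_univ i) h
      have h_r : ∀ i, (∑ q, wplus (Sum.inr i) q * (x (Sum.inr i) - x q)^2)
          = ν i * (a i - b i)^2 := by
        intro i
        rw [Fintype.sum_sum_type]
        have e2 : ∑ j, wplus (Sum.inr i) (Sum.inr j) * (x (Sum.inr i) - x (Sum.inr j))^2 = 0 :=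
          Finset.sum_eq_zero fun j _ => by rw [hw4, zero_mul]
        have e1 : ∑ j, wplus (Sum.inr i) (Sum.inl j) * (x (Sum.inr i) - x (Sum.inl j))^2
            = ν i * (a i - b i)^2 := by
          rw [Finset.sum_eq_single i]
          · rw [hw2']; simp only [ha, hb]; ring
          · intro j _ hj
            rw [hw3' _ _ (Ne.symm hj), zero_mul]
          · intro h; exact absurd (Finset.mem_univ i) h
        rw [e1, e2, add_zero]
      rw [Finset.sum_congr rfl (fun i _ => h_l i), Finset.sum_congr rfl (fun i _ => h_r i),
        Finset.sum_add_distrib]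
      rw [hA]; ring
    rw [hsplit]
    -- Rayleigh bound on the G part
    have hAq : (1/2) * A = dotProduct a ((lap w).mulVec a) :=
      (quad_form w hsymm hdiag a).symm
    set S : ℝ := ∑ i, (a i - (∑ j, a j) / n)^2 with hSdef
    have hray : lam2 (lap w) * S ≤ (1/2) * A := by
      rw [hAq]; exact rayleigh w hsymm hdiag hnonneg a
    have hS0 : 0 ≤ S := Finset.sum_nonneg fun i _ => sq_nonneg _
    set T : ℝ := ∑ i, (a i - b i)^2 with hTdef
    have hT0 : 0 ≤ T := Finset.sum_nonneg fun i _ => sq_nonneg _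
    have hcT : c * T ≤ T' := by
      rw [hTdef, Finset.mul_sum]
      exact Finset.sum_le_sum fun i _ => mul_le_mul_of_nonneg_right (hcν i) (sq_nonneg _)
    have hcS : c * S ≤ lam2 (lap w) * S :=
      mul_le_mul_of_nonneg_right (min_le_left _ _) hS0
    -- the arithmetic: S + T ≥ 1/4
    have hS_eq : S = (∑ i, (a i)^2) - (∑ i, a i)^2 / n := by
      rw [hSdef]
      have : ∀ i, (a i - (∑ j, a j) / n)^2
          = (a i)^2 - 2 * ((∑ j, a j)/n) * a i + ((∑ j, a j)/n)^2 := fun i => by ring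
      rw [Finset.sum_congr rfl fun i _ => this i]
      rw [Finset.sum_add_distrib, Finset.sum_sub_distrib, ← Finset.mul_sum,
        Finset.sum_const, card_univ, nsmul_eq_mul, ← hn]
      field_simp
      ring
    have hCS : (∑ i, (a i - b i))^2 ≤ n * T := by
      have := sq_sum_le_card_mul_sum_sq (s := (univ : Finset V)) (f := fun i => a i - b i)
      rw [hTdef]
      calc (∑ i, (a i - b i))^2 ≤ (#(univ : Finset V) : ℝ) * ∑ i, (a i - b i)^2 := by
            exact_mod_cast this
        _ = n * ∑ i, (a i - b i)^2 := by rw [card_univ, hn]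
    have hd : ∑ i, (a i - b i) = 2 * ∑ i, a i := by
      rw [Finset.sum_sub_distrib]; linarith [hx0]
    have h4 : (∑ i, a i)^2 / n ≤ T / 4 := by
      rw [div_le_div_iff₀ hnpos (by norm_num : (0:ℝ) < 4)]
      rw [hd] at hCS
      nlinarith [hCS]
    have hb2 : ∑ i, (b i)^2 ≤ 2 * ∑ i, (a i)^2 + 2 * T := by
      have : ∀ i, (b i)^2 ≤ 2 * (a i)^2 + 2 * (a i - b i)^2 := fun i => by nlinarith [sq_nonneg (a i + (a i - b i))]
      calc ∑ i, (b i)^2 ≤ ∑ i, (2 * (a i)^2 + 2 * (a i - b i)^2) :=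
            Finset.sum_le_sum fun i _ => this i
        _ = 2 * ∑ i, (a i)^2 + 2 * T := by
            rw [Finset.sum_add_distrib, ← Finset.mul_sum, ← Finset.mul_sum, hTdef]
    have hquarter : 1/4 ≤ S + T := by linarith [hx1, hS_eq, h4, hb2, hS0, hT0]
    have hfin : c * (1/4) ≤ c * (S + T) := mul_le_mul_of_nonneg_left hquarter hc0.le
    have hdist : c * (S + T) = c * S + c * T := mul_add _ _ _
    linarith [hray, hcS, hcT, hfin, hdist]
end

section
/- Let f_i : ℝ^d → ℝ be σ-strongly convex and L-smooth for each i ∈ V, let A ∈ ℝ^{V×E} with A e_{ij} = μ_{ij}(e_i - e_j), and define F_A*(λ) = Σ_{i∈V} f_i*((Aλ)_i) where f_i* is the Fenchel conjugate. Then for each edge (ij), F_A* is L_{ij}-smooth on the coordinate subspace E_{ij} with L_{ij} = 4 μ_{ij}² σ^{-1}. -/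
open Finset

/-- Fenchel conjugate of a function on a Euclidean space. -/
noncomputable def fenchel {d : ℕ} (g : EuclideanSpace ℝ (Fin d) → ℝ)
    (y : EuclideanSpace ℝ (Fin d)) : ℝ :=
  ⨆ x : EuclideanSpace ℝ (Fin d), (inner ℝ x y : ℝ) - g x

section Helpers

lemma oneD_convex_deriv_le {φ : ℝ → ℝ} (hφ : ConvexOn ℝ Set.univ φ) {p : ℝ}
    (hp : HasDerivAt φ p 0) : p ≤ φ 1 - φ 0 := by
  have htend : Filter.Tendsto (slope φ 0) (nhdsWithin 0 (Set.Ioi 0)) (nhds p) :=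
    (hasDerivAt_iff_tendsto_slope.mp hp).mono_left
      (nhdsWithin_mono 0 (fun t ht => ne_of_gt ht))
  refine le_of_tendsto htend ?_
  filter_upwards [Ioc_mem_nhdsGT_of_mem (by norm_num : (0:ℝ) ∈ Set.Ico 0 1)] with t ht
  have h1 := hφ.secant_mono (Set.mem_univ 0) (Set.mem_univ t) (Set.mem_univ 1)
    (ne_of_gt ht.1) one_ne_zero ht.2
  simpa [slope_def_field] using h1

variable {d : ℕ}

local notation "Euc" => EuclideanSpace ℝ (Fin d)

/-- First-order condition for convex differentiable functions. -/
lemma convex_first_order {g : Euc → ℝ} (hg : ConvexOn ℝ Set.univ g)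
    {x : Euc} {L : Euc →L[ℝ] ℝ} (hx : HasFDerivAt g L x) (y : Euc) :
    g x + L (y - x) ≤ g y := by
  set c : ℝ → Euc := fun t => x + t • (y - x) with hc
  have hcderiv : HasDerivAt c (y - x) 0 := by
    simpa [hc] using ((hasDerivAt_id (0:ℝ)).smul_const (y - x)).const_add x
  have hc0 : c 0 = x := by simp [hc]
  have hφ : HasDerivAt (g ∘ c) (L (y - x)) 0 := by
    refine HasFDerivAt.comp_hasDerivAt 0 ?_ hcderiv
    rw [hc0]; exact hx
  have hconv : ConvexOn ℝ Set.univ (g ∘ c) := by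
    have := hg.comp_affineMap (AffineMap.lineMap x y)
    simp only [Set.preimage_univ] at this
    have hfun : g ∘ c = g ∘ ⇑(AffineMap.lineMap x y) := by
      funext t
      simp [hc, AffineMap.lineMap_apply, add_comm]
    rw [hfun]; exact this
  have h2 := oneD_convex_deriv_le hconv hφ
  have e1 : c 1 = y := by simp [hc]
  simp only [Function.comp_apply, hc0, e1] at h2
  linarith [h2]

/-- First-order lower bound for strongly convex differentiable functions. -/
lemma strong_first_order {σ : ℝ} {g : Euc → ℝ} (hsc : StrongConvexOn Set.univ σ g)
    {x p : Euc} (hx : HasGradientAt g p x) (y : Euc) :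
    g x + (inner ℝ p (y - x) : ℝ) + σ/2 * ‖y - x‖^2 ≤ g y := by
  have hconv : ConvexOn ℝ Set.univ (fun z : Euc => g z - σ/2 * ‖z‖^2) := by
    exact strongConvexOn_iff_convex.mp hsc
  have hin : HasFDerivAt (fun z : Euc => (inner ℝ z z : ℝ))
      ((fderivInnerCLM ℝ (x,x)).comp ((ContinuousLinearMap.id ℝ Euc).prod
        (ContinuousLinearMap.id ℝ Euc))) x := (hasFDerivAt_id x).inner ℝ (hasFDerivAt_id x)
  have hM : HasFDerivAt (fun z : Euc => σ/2 * ‖z‖^2)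
      ((σ/2) • ((fderivInnerCLM ℝ (x,x)).comp ((ContinuousLinearMap.id ℝ Euc).prod
        (ContinuousLinearMap.id ℝ Euc)))) x := by
    have h2 := hin.const_mul (σ/2)
    have : (fun z : Euc => σ/2 * ‖z‖^2) = fun z : Euc => σ/2 * (inner ℝ z z : ℝ) := by
      funext z; rw [real_inner_self_eq_norm_sq]
    rw [this]
    exact h2
  have hq : HasFDerivAt (fun z : Euc => g z - σ/2 * ‖z‖^2)
      (InnerProductSpace.toDual ℝ Euc p - (σ/2) • ((fderivInnerCLM ℝ (x,x)).comp
        ((ContinuousLinearMap.id ℝ Euc).prod (ContinuousLinearMap.id ℝ Euc)))) x :=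
    hx.hasFDerivAt.sub hM
  have key := convex_first_order hconv hq y
  simp only [ContinuousLinearMap.sub_apply, ContinuousLinearMap.smul_apply,
    ContinuousLinearMap.comp_apply, ContinuousLinearMap.prod_apply,
    ContinuousLinearMap.coe_id', id_eq, fderivInnerCLM_apply,
    InnerProductSpace.toDual_apply_apply, smul_eq_mul] at key
  have hns : ‖y - x‖^2 = ‖y‖^2 - 2 * (inner ℝ y x : ℝ) + ‖x‖^2 := norm_sub_sq_real y x
  have h1 : (inner ℝ x (y - x) : ℝ) = (inner ℝ x y : ℝ) - ‖x‖^2 := by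
    rw [inner_sub_right, real_inner_self_eq_norm_sq]
  have h2 : (inner ℝ (y - x) x : ℝ) = (inner ℝ x (y-x) : ℝ) := real_inner_comm _ _
  have h3 : (inner ℝ y x : ℝ) = (inner ℝ x y : ℝ) := real_inner_comm _ _
  rw [h2, h1] at key
  have expand : σ/2 * ‖y - x‖^2 = σ/2*‖y‖^2 - σ * (inner ℝ x y : ℝ) + σ/2*‖x‖^2 := by
    rw [hns, h3]; ring
  linarith [key, expand]

/-- Existence of a point where the gradient takes a prescribed value. -/
lemma exists_gradient_eq {σ : ℝ} (hσ : 0 < σ) {g : Euc → ℝ}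
    (hsc : StrongConvexOn Set.univ σ g) (hd : Differentiable ℝ g) (y : Euc) :
    ∃ x, HasGradientAt g y x := by
  set φ : Euc → ℝ := fun z => g z - (innerSL ℝ y) z with hφ
  have hφc : Continuous φ := hd.continuous.sub (innerSL ℝ y).continuous
  set p0 : Euc := gradient g 0 with hp0
  have hg0 : HasGradientAt g p0 0 := (hd 0).hasGradientAt
  set C : ℝ := ‖p0 - y‖ with hC
  have hlb : ∀ z : Euc, g 0 - C * ‖z‖ + σ/2 * ‖z‖^2 ≤ φ z := by
    intro z
    have h1 := strong_first_order hsc hg0 z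
    simp only [sub_zero] at h1
    have h2 : -(C * ‖z‖) ≤ (inner ℝ (p0 - y) z : ℝ) := by
      have := abs_real_inner_le_norm (p0 - y) z
      rw [abs_le] at this
      exact this.1
    have h3 : (inner ℝ (p0 - y) z : ℝ) = (inner ℝ p0 z : ℝ) - (inner ℝ y z : ℝ) := by
      rw [inner_sub_left]
    simp only [hφ, innerSL_apply_apply]
    linarith
  set R : ℝ := 2 * C / σ + 1 with hR
  have hC0 : 0 ≤ C := norm_nonneg _
  have hR0 : 0 < R := by positivity
  have hout : ∀ z : Euc, R < ‖z‖ → φ 0 < φ z := by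
    intro z hz
    have hz0 : (0:ℝ) < ‖z‖ := lt_trans hR0 hz
    have : C < σ/2 * ‖z‖ := by
      rw [hR] at hz
      calc C = σ/2 * (2 * C / σ) := by field_simp
        _ < σ/2 * ‖z‖ := by
          apply mul_lt_mul_of_pos_left _ (by positivity)
          linarith
    have h2 : 0 < σ/2 * ‖z‖^2 - C * ‖z‖ := by nlinarith
    have h3 := hlb z
    have hφ0 : φ 0 = g 0 := by simp [hφ]
    rw [hφ0]
    have h4 : g 0 + (σ/2 * ‖z‖^2 - C * ‖z‖) ≤ φ z := by linarith [h3]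
    calc g 0 < g 0 + (σ/2 * ‖z‖^2 - C * ‖z‖) := by linarith [h2]
      _ ≤ φ z := h4
  obtain ⟨xm, hxmem, hxmin⟩ := (isCompact_closedBall (0:Euc) R).exists_isMinOn
    ⟨0, by simpa using hR0.le⟩ hφc.continuousOn
  have hglobal : ∀ z : Euc, φ xm ≤ φ z := by
    intro z
    by_cases hz : z ∈ Metric.closedBall (0:Euc) R
    · exact hxmin hz
    · have : R < ‖z‖ := by simpa [Metric.mem_closedBall, dist_zero_right] using hz
      have h0mem : (0:Euc) ∈ Metric.closedBall (0:Euc) R := by simpa using hR0.le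
      exact le_trans (hxmin h0mem) (hout z this).le
  have hlocmin : IsLocalMin φ xm := Filter.Eventually.of_forall hglobal
  have hφF : HasFDerivAt φ (InnerProductSpace.toDual ℝ Euc (gradient g xm) - innerSL ℝ y) xm :=
    ((hd xm).hasGradientAt.hasFDerivAt).sub (innerSL ℝ y).hasFDerivAt
  have hzero := hlocmin.hasFDerivAt_eq_zero hφF
  have heq : InnerProductSpace.toDual ℝ Euc (gradient g xm) = innerSL ℝ y := by
    rwa [sub_eq_zero] at hzero
  refine ⟨xm, ?_⟩
  have : InnerProductSpace.toDual ℝ Euc y = innerSL ℝ y := by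
    ext z; simp [InnerProductSpace.toDual_apply_apply]
  rw [hasGradientAt_iff_hasFDerivAt, this, ← heq]
  exact (hd xm).hasGradientAt.hasFDerivAt

lemma fenchel_dom {σ : ℝ} (hσ : 0 ≤ σ) {g : Euc → ℝ} (hsc : StrongConvexOn Set.univ σ g)
    {y x : Euc} (hx : HasGradientAt g y x) (z : Euc) :
    (inner ℝ z y : ℝ) - g z ≤ (inner ℝ x y : ℝ) - g x := by
  have h1 := strong_first_order hsc hx z
  have e1 : (inner ℝ y (z - x) : ℝ) = (inner ℝ y z : ℝ) - (inner ℝ y x : ℝ) := inner_sub_right _ _ _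
  have e2 : (inner ℝ y z : ℝ) = (inner ℝ z y : ℝ) := real_inner_comm _ _
  have e3 : (inner ℝ y x : ℝ) = (inner ℝ x y : ℝ) := real_inner_comm _ _
  have e4 : (0:ℝ) ≤ σ/2 * ‖z - x‖^2 := by positivity
  linarith

lemma fenchel_bddAbove {σ : ℝ} (hσ : 0 ≤ σ) {g : Euc → ℝ} (hsc : StrongConvexOn Set.univ σ g)
    {y x : Euc} (hx : HasGradientAt g y x) :
    BddAbove (Set.range fun z : Euc => (inner ℝ z y : ℝ) - g z) := by
  refine ⟨(inner ℝ x y : ℝ) - g x, ?_⟩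
  rintro _ ⟨z, rfl⟩
  exact fenchel_dom hσ hsc hx z

lemma fenchel_eq {σ : ℝ} (hσ : 0 ≤ σ) {g : Euc → ℝ} (hsc : StrongConvexOn Set.univ σ g)
    {y x : Euc} (hx : HasGradientAt g y x) :
    fenchel g y = (inner ℝ x y : ℝ) - g x := by
  refine le_antisymm (ciSup_le fun z => fenchel_dom hσ hsc hx z) ?_
  exact le_ciSup (fenchel_bddAbove hσ hsc hx) x

lemma grad_points_lip {σ : ℝ} (hσ : 0 < σ) {g : Euc → ℝ} (hsc : StrongConvexOn Set.univ σ g)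
    {y1 x1 y2 x2 : Euc} (h1 : HasGradientAt g y1 x1) (h2 : HasGradientAt g y2 x2) :
    ‖x1 - x2‖ ≤ σ⁻¹ * ‖y1 - y2‖ := by
  have a1 := strong_first_order hsc h1 x2
  have a2 := strong_first_order hsc h2 x1
  have key : σ * ‖x1 - x2‖^2 ≤ (inner ℝ (y1 - y2) (x1 - x2) : ℝ) := by
    have e1 : (inner ℝ (y1 - y2) (x1 - x2) : ℝ)
        = (inner ℝ y1 (x1 - x2) : ℝ) - (inner ℝ y2 (x1 - x2) : ℝ) := inner_sub_left _ _ _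
    have e2 : (inner ℝ y1 (x2 - x1) : ℝ) = -(inner ℝ y1 (x1 - x2) : ℝ) := by
      rw [← inner_neg_right, neg_sub]
    have e3 : ‖x2 - x1‖ = ‖x1 - x2‖ := norm_sub_rev _ _
    rw [e3] at a1
    linarith
  have hn := real_inner_le_norm (y1 - y2) (x1 - x2)
  by_cases hz : ‖x1 - x2‖ = 0
  · rw [hz]; positivity
  · have hpos : 0 < ‖x1 - x2‖ := lt_of_le_of_ne (norm_nonneg _) (Ne.symm hz)
    have h5 : σ * ‖x1 - x2‖ * ‖x1 - x2‖ ≤ ‖y1 - y2‖ * ‖x1 - x2‖ := by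
      calc σ * ‖x1 - x2‖ * ‖x1 - x2‖ = σ * ‖x1 - x2‖^2 := by ring
        _ ≤ (inner ℝ (y1 - y2) (x1 - x2) : ℝ) := key
        _ ≤ ‖y1 - y2‖ * ‖x1 - x2‖ := hn
    have h6 : σ * ‖x1 - x2‖ ≤ ‖y1 - y2‖ := le_of_mul_le_mul_right h5 hpos
    calc ‖x1 - x2‖ = σ⁻¹ * (σ * ‖x1 - x2‖) := by field_simp
      _ ≤ σ⁻¹ * ‖y1 - y2‖ := by
        apply mul_le_mul_of_nonneg_left h6 (by positivity)

lemma fenchel_upper {σ : ℝ} (hσ : 0 < σ) {g : Euc → ℝ} (hsc : StrongConvexOn Set.univ σ g)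
    {y v x1 x2 : Euc} (h1 : HasGradientAt g y x1) (h2 : HasGradientAt g (y + v) x2) :
    fenchel g (y + v) ≤ fenchel g y + (inner ℝ x1 v : ℝ) + σ⁻¹ * ‖v‖^2 := by
  have hf2 := fenchel_eq hσ.le hsc h2
  have hf1 := fenchel_eq hσ.le hsc h1
  have hdom := fenchel_dom hσ.le hsc h1 x2
  have hlip : ‖x2 - x1‖ ≤ σ⁻¹ * ‖v‖ := by
    have := grad_points_lip hσ hsc h2 h1
    simpa using this
  have hsplit : (inner ℝ x2 (y + v) : ℝ) = (inner ℝ x2 y : ℝ) + (inner ℝ x2 v : ℝ) :=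
    inner_add_right _ _ _
  have hsplit2 : (inner ℝ x2 v : ℝ) = (inner ℝ x1 v : ℝ) + (inner ℝ (x2 - x1) v : ℝ) := by
    rw [inner_sub_left]; ring
  have hb : (inner ℝ (x2 - x1) v : ℝ) ≤ σ⁻¹ * ‖v‖^2 := by
    calc (inner ℝ (x2 - x1) v : ℝ) ≤ ‖x2 - x1‖ * ‖v‖ := real_inner_le_norm _ _
      _ ≤ (σ⁻¹ * ‖v‖) * ‖v‖ := by
        apply mul_le_mul_of_nonneg_right hlip (norm_nonneg _)
      _ = σ⁻¹ * ‖v‖^2 := by ring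
  rw [hf2, hf1]
  linarith

lemma fenchel_lower {σ : ℝ} (hσ : 0 ≤ σ) {g : Euc → ℝ} (hsc : StrongConvexOn Set.univ σ g)
    {y v x1 x2 : Euc} (h1 : HasGradientAt g y x1) (h2 : HasGradientAt g (y + v) x2) :
    fenchel g y + (inner ℝ x1 v : ℝ) ≤ fenchel g (y + v) := by
  have hf1 := fenchel_eq hσ hsc h1
  have hle : (inner ℝ x1 (y + v) : ℝ) - g x1 ≤ fenchel g (y + v) :=
    le_ciSup (fenchel_bddAbove hσ hsc h2) x1
  have : (inner ℝ x1 (y + v) : ℝ) = (inner ℝ x1 y : ℝ) + (inner ℝ x1 v : ℝ) := inner_add_right _ _ _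
  rw [hf1]
  linarith

lemma fenchel_hasGradient {σ : ℝ} (hσ : 0 < σ) {g : Euc → ℝ}
    (hsc : StrongConvexOn Set.univ σ g) (hd : Differentiable ℝ g)
    {y x1 : Euc} (h1 : HasGradientAt g y x1) :
    HasFDerivAt (fenchel g) (InnerProductSpace.toDual ℝ Euc x1) y := by
  rw [hasFDerivAt_iff_isLittleO_nhds_zero]
  rw [Asymptotics.isLittleO_iff]
  intro c hc
  have hball : Metric.closedBall (0 : Euc) (c * σ) ∈ nhds (0 : Euc) :=
    Metric.closedBall_mem_nhds _ (by positivity)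
  filter_upwards [hball] with v hv
  rw [Metric.mem_closedBall, dist_zero_right] at hv
  obtain ⟨x2, hx2⟩ := exists_gradient_eq hσ hsc hd (y + v)
  have hup := fenchel_upper hσ hsc h1 hx2
  have hlo := fenchel_lower hσ.le hsc h1 hx2
  have htd : (InnerProductSpace.toDual ℝ Euc x1) v = (inner ℝ x1 v : ℝ) :=
    InnerProductSpace.toDual_apply_apply
  have herr : |fenchel g (y + v) - fenchel g y - (inner ℝ x1 v : ℝ)| ≤ σ⁻¹ * ‖v‖^2 := by
    rw [abs_le]
    constructor
    · have h0 : (0:ℝ) ≤ σ⁻¹ * ‖v‖^2 := by positivity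
      linarith
    · linarith
  have hfin : σ⁻¹ * ‖v‖^2 ≤ c * ‖v‖ := by
    have : σ⁻¹ * ‖v‖^2 = (σ⁻¹ * ‖v‖) * ‖v‖ := by ring
    rw [this]
    apply mul_le_mul_of_nonneg_right _ (norm_nonneg _)
    calc σ⁻¹ * ‖v‖ ≤ σ⁻¹ * (c * σ) := mul_le_mul_of_nonneg_left hv (by positivity)
      _ = c := by field_simp
  calc ‖fenchel g (y + v) - fenchel g y - (InnerProductSpace.toDual ℝ Euc x1) v‖
      = |fenchel g (y + v) - fenchel g y - (inner ℝ x1 v : ℝ)| := by rw [htd]; rfl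
    _ ≤ σ⁻¹ * ‖v‖^2 := herr
    _ ≤ c * ‖v‖ := hfin

end Helpers

theorem dual_block_smoothness
    {V E : Type*} [Fintype V] [Fintype E] [DecidableEq V] [DecidableEq E]
    (d : ℕ) (σ L : ℝ) (hσ : 0 < σ) (hL : 0 < L)
    (ep1 ep2 : E → V) (hloop : ∀ e, ep1 e ≠ ep2 e)
    (μ : E → ℝ) (hμ : ∀ e, μ e ≠ 0)
    (A : Matrix V E ℝ)
    (hA : ∀ e i, A i e = μ e * ((if i = ep1 e then 1 else 0) - (if i = ep2 e then 1 else 0)))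
    (f : V → EuclideanSpace ℝ (Fin d) → ℝ)
    (hsc : ∀ i, StrongConvexOn Set.univ σ (f i))
    (hdiff : ∀ i, Differentiable ℝ (f i))
    (hsmooth : ∀ i x y, ‖gradient (f i) x - gradient (f i) y‖ ≤ L * ‖x - y‖)
    (FAstar : PiLp 2 (fun _ : E => EuclideanSpace ℝ (Fin d)) → ℝ)
    (hFAstar : ∀ lam, FAstar lam = ∑ i, fenchel (f i) (∑ e, A i e • lam e))
    (e : E) :
    ∀ (lam : PiLp 2 (fun _ : E => EuclideanSpace ℝ (Fin d)))
      (h : EuclideanSpace ℝ (Fin d)),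
      FAstar (WithLp.toLp 2 (Function.update lam e (lam e + h))) ≤
        FAstar lam + (inner ℝ ((gradient FAstar lam) e) h : ℝ) +
          ((4 * μ e ^ 2 * σ⁻¹) / 2) * ‖h‖ ^ 2 := by
  intro lam h
  classical
  -- continuous linear maps B i
  set B : V → ((PiLp 2 (fun _ : E => EuclideanSpace ℝ (Fin d))) →L[ℝ] EuclideanSpace ℝ (Fin d)) :=
    fun i => ∑ e', A i e' • PiLp.proj 2 (fun _ : E => EuclideanSpace ℝ (Fin d)) e' with hBdef
  have hB : ∀ i (l : PiLp 2 (fun _ : E => EuclideanSpace ℝ (Fin d))),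
      B i l = ∑ e', A i e' • l e' := by
    intro i l
    simp [hBdef, ContinuousLinearMap.sum_apply, PiLp.proj_apply]
  have hFA : FAstar = fun l => ∑ i, fenchel (f i) (B i l) := by
    funext l
    rw [hFAstar]
    congr 1
    funext i
    rw [hB]
  -- maximizers
  have hx : ∀ i : V, ∃ x, HasGradientAt (f i) (B i lam) x :=
    fun i => exists_gradient_eq hσ (hsc i) (hdiff i) (B i lam)
  choose x hxg using hx
  -- derivative of FAstar at lam
  set D : (PiLp 2 (fun _ : E => EuclideanSpace ℝ (Fin d))) →L[ℝ] ℝ :=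
    ∑ i, (InnerProductSpace.toDual ℝ (EuclideanSpace ℝ (Fin d)) (x i)).comp (B i) with hDdef
  have hDeriv : HasFDerivAt FAstar D lam := by
    rw [hFA, hDdef]
    apply HasFDerivAt.fun_sum
    intro i _
    exact (fenchel_hasGradient hσ (hsc i) (hdiff i) (hxg i)).comp lam (B i).hasFDerivAt
  have hgrad : gradient FAstar lam
      = (InnerProductSpace.toDual ℝ (PiLp 2 (fun _ : E => EuclideanSpace ℝ (Fin d)))).symm D :=
    (hasFDerivAt_iff_hasGradientAt.mp hDeriv).gradient
  -- the direction u
  set u : PiLp 2 (fun _ : E => EuclideanSpace ℝ (Fin d)) := WithLp.toLp 2 (Pi.single e h) with hu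
  have hupdate : WithLp.toLp 2 (Function.update lam e (lam e + h)) = lam + u := by
    ext e' : 1
    have hadd : (lam + u) e' = lam e' + u e' := rfl
    by_cases he : e' = e
    · subst he; simp [hu, hadd, Pi.single_eq_same]
    · simp [hu, Function.update_of_ne he, hadd, Pi.single_eq_of_ne he, he]
  -- B i u
  have hBu : ∀ i, B i u = A i e • h := by
    intro i
    rw [hB]
    rw [Finset.sum_eq_single e]
    · simp [hu]
    · intro b _ hb
      simp [hu, Pi.single_eq_of_ne hb, hb]
    · intro hb; exact absurd (Finset.mem_univ e) hb
  -- B i (lam + u)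
  have hBlu : ∀ i, B i (lam + u) = B i lam + A i e • h := by
    intro i
    rw [map_add, hBu]
  -- inner of gradient coordinate
  have hinner : (inner ℝ ((gradient FAstar lam) e) h : ℝ) = D u := by
    have h1 : (inner ℝ (gradient FAstar lam) u : ℝ) = D u := by
      rw [hgrad]
      exact InnerProductSpace.toDual_symm_apply
    have h2 : (inner ℝ (gradient FAstar lam) u : ℝ)
        = ∑ e' : E, (inner ℝ ((gradient FAstar lam) e') (u e') : ℝ) := PiLp.inner_apply _ _
    have h3 : ∑ e' : E, (inner ℝ ((gradient FAstar lam) e') (u e') : ℝ)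
        = (inner ℝ ((gradient FAstar lam) e) (u e) : ℝ) := by
      apply Finset.sum_eq_single e
      · intro b _ hb
        have : u b = 0 := by rw [hu]; exact Pi.single_eq_of_ne (M := fun _ : E => EuclideanSpace ℝ (Fin d)) hb h
        rw [this, inner_zero_right]
      · intro hb; exact absurd (Finset.mem_univ e) hb
    have h4 : u e = h := by rw [hu]; exact Pi.single_eq_same (M := fun _ : E => EuclideanSpace ℝ (Fin d)) e h
    rw [← h1, h2, h3, h4]
  -- D u value
  have hDu : D u = ∑ i, (inner ℝ (x i) (A i e • h) : ℝ) := by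
    rw [hDdef]
    rw [ContinuousLinearMap.sum_apply]
    congr 1
    funext i
    rw [ContinuousLinearMap.comp_apply, hBu, InnerProductSpace.toDual_apply_apply]
  -- per coordinate bound
  have hx2 : ∀ i : V, ∃ x2, HasGradientAt (f i) (B i lam + A i e • h) x2 :=
    fun i => exists_gradient_eq hσ (hsc i) (hdiff i) _
  choose x2 hx2g using hx2
  have hbound : ∀ i : V,
      fenchel (f i) (B i (lam + u)) ≤
        fenchel (f i) (B i lam) + (inner ℝ (x i) (A i e • h) : ℝ) + σ⁻¹ * ((A i e)^2 * ‖h‖^2) := by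
    intro i
    rw [hBlu i]
    have := fenchel_upper hσ (hsc i) (hxg i) (hx2g i)
    have hnorm : ‖A i e • h‖^2 = (A i e)^2 * ‖h‖^2 := by
      rw [norm_smul]
      rw [mul_pow, Real.norm_eq_abs, sq_abs]
    rw [hnorm] at this
    exact this
  -- sum of squares of column e
  have hcol : ∑ i : V, (A i e)^2 = 2 * μ e ^ 2 := by
    have : ∀ i : V, (A i e)^2
        = μ e ^ 2 * ((if i = ep1 e then (1:ℝ) else 0) + (if i = ep2 e then 1 else 0)) := by
      intro i
      rw [hA]
      by_cases h1 : i = ep1 e <;> by_cases h2 : i = ep2 e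
      · exact absurd (h1 ▸ h2) (hloop e)
      · subst h1; simp [hloop e, h2]
      · subst h2; simp [Ne.symm (hloop e), h1]
      · simp [h1, h2]
    rw [Finset.sum_congr rfl (fun i _ => this i)]
    rw [← Finset.mul_sum, Finset.sum_add_distrib]
    simp [Finset.sum_ite_eq']
    ring
  -- put it together
  rw [hupdate, hinner, hDu]
  calc FAstar (lam + u) = ∑ i, fenchel (f i) (B i (lam + u)) := by rw [hFA]
    _ ≤ ∑ i, (fenchel (f i) (B i lam) + (inner ℝ (x i) (A i e • h) : ℝ)
          + σ⁻¹ * ((A i e)^2 * ‖h‖^2)) := Finset.sum_le_sum (fun i _ => hbound i)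
    _ = (∑ i, fenchel (f i) (B i lam)) + (∑ i, (inner ℝ (x i) (A i e • h) : ℝ))
          + σ⁻¹ * (∑ i, (A i e)^2) * ‖h‖^2 := by
        have hsum3 : ∑ i : V, σ⁻¹ * ((A i e)^2 * ‖h‖^2)
            = σ⁻¹ * (∑ i : V, (A i e)^2) * ‖h‖^2 := by
          rw [Finset.mul_sum, Finset.sum_mul]
          apply Finset.sum_congr rfl
          intro i _; ring
        rw [Finset.sum_add_distrib, Finset.sum_add_distrib, hsum3]
    _ = FAstar lam + (∑ i, (inner ℝ (x i) (A i e • h) : ℝ))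
          + (4 * μ e ^ 2 * σ⁻¹) / 2 * ‖h‖ ^ 2 := by
        rw [hcol, hFA]
        ring
end

section
/- With F_A* as above, for each edge (ij) and all λ, λ' ∈ ℝ^{E×d}: ‖∇_{ij}F_A*(λ) - ∇_{ij}F_A*(λ')‖ ≤ Σ_{(kl)∼(ij)} √(L_{ij} L_{kl}) · ‖λ_{kl} - λ'_{kl}‖, where L_{ij} = 4 μ_{ij}² σ^{-1} and the sum is over edges (kl) sharing a node with (ij) (including (ij) itself). -/
open Finset

section aux

variable {d : ℕ}

local notation "Fd" => EuclideanSpace ℝ (Fin d)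

/-- A continuous convex function on Euclidean space has an affine lower bound. -/
lemma convex_linear_lower_bound (g : Fd → ℝ) (hg : ConvexOn ℝ Set.univ g)
    (hc : Continuous g) : ∃ C : ℝ, 0 ≤ C ∧ ∀ x : Fd, -(C * (1 + ‖x‖)) ≤ g x := by
  obtain ⟨C₀, hC₀⟩ := (isCompact_closedBall (0 : Fd) 1).exists_bound_of_continuousOn
    hc.continuousOn
  have hC₀0 : 0 ≤ C₀ := le_trans (norm_nonneg _) (hC₀ 0 (by simp))
  refine ⟨2 * C₀, by positivity, fun x => ?_⟩
  by_cases hx : ‖x‖ ≤ 1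
  · have h1 : ‖g x‖ ≤ C₀ := hC₀ x (by simpa [Metric.mem_closedBall, dist_eq_norm] using hx)
    have h2 := abs_le.mp (by simpa [Real.norm_eq_abs] using h1)
    nlinarith [norm_nonneg x]
  · push_neg at hx
    set t : ℝ := ‖x‖⁻¹ with ht
    have hxn : (0:ℝ) < ‖x‖ := by linarith
    have ht0 : 0 < t := by positivity
    have ht1 : t < 1 := by rw [ht]; exact inv_lt_one_of_one_lt₀ hx
    have key := hg.2 (Set.mem_univ (0 : Fd)) (Set.mem_univ x) (by linarith : (0:ℝ) ≤ 1 - t)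
      ht0.le (by ring)
    simp only [smul_zero, zero_add, smul_eq_mul] at key
    have hu : ‖t • x‖ ≤ 1 := by
      rw [norm_smul, Real.norm_eq_abs, abs_of_pos ht0, ht, inv_mul_cancel₀ hxn.ne']
    have h1 : ‖g (t • x)‖ ≤ C₀ := hC₀ _ (by simpa [Metric.mem_closedBall, dist_eq_norm] using hu)
    have h2 := abs_le.mp (by simpa [Real.norm_eq_abs] using h1)
    have h3 : ‖g 0‖ ≤ C₀ := hC₀ 0 (by simp)
    have h4 := abs_le.mp (by simpa [Real.norm_eq_abs] using h3)
    -- from key : g (t • x) ≤ (1 - t) * g 0 + t * g x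
    have htx : t * ‖x‖ = 1 := by rw [ht, inv_mul_cancel₀ hxn.ne']
    nlinarith [key, h2.1, h4.1, h4.2, mul_pos ht0 hxn]


lemma exists_fenchel_max (f : Fd → ℝ) (σ : ℝ) (hσ : 0 < σ)
    (hf : StrongConvexOn Set.univ σ f) (y : Fd) :
    ∃ m : Fd, ∀ x : Fd, (inner ℝ x y : ℝ) - f x ≤ (inner ℝ m y : ℝ) - f m := by
  have hconv : ConvexOn ℝ Set.univ f := hf.convexOn (fun r => by positivity)
  have hcont : Continuous f := by
    exact continuousOn_univ.mp (hconv.continuousOn isOpen_univ)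
  set g : Fd → ℝ := fun x => f x - σ / 2 * ‖x‖ ^ 2 with hgdef
  have hgconv : ConvexOn ℝ Set.univ g := strongConvexOn_iff_convex.mp hf
  have hgcont : Continuous g := by
    apply hcont.sub; continuity
  obtain ⟨C, hC0, hC⟩ := convex_linear_lower_bound g hgconv hgcont
  set h : Fd → ℝ := fun x => (inner ℝ x y : ℝ) - f x with hhdef
  have hhcont : Continuous h := by
    apply Continuous.sub _ hcont
    exact continuous_id.inner continuous_const
  -- coercivity bound
  have hbound : ∀ x : Fd, h x ≤ (‖y‖ + C) * ‖x‖ + C - σ / 2 * ‖x‖ ^ 2 := by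
    intro x
    have h1 : (inner ℝ x y : ℝ) ≤ ‖x‖ * ‖y‖ := real_inner_le_norm x y
    have h2 := hC x
    simp only [hhdef, hgdef] at *
    nlinarith
  set R : ℝ := max 1 (2 * (‖y‖ + C + C + |h 0| + 1) / σ) with hR
  have hR1 : (1:ℝ) ≤ R := le_max_left _ _
  -- outside the ball of radius R, h x < h 0
  have hout : ∀ x : Fd, R < ‖x‖ → h x < h 0 := by
    intro x hx
    have hxR : R ≤ ‖x‖ := hx.le
    have h1 : 2 * (‖y‖ + C + C + |h 0| + 1) / σ ≤ ‖x‖ := le_trans (le_max_right _ _) hxR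
    have h2 : 2 * (‖y‖ + C + C + |h 0| + 1) ≤ σ * ‖x‖ := by
      rw [div_le_iff₀ hσ] at h1; linarith [h1]
    have h3 : h x ≤ (‖y‖ + C) * ‖x‖ + C - σ / 2 * ‖x‖ ^ 2 := hbound x
    have hx1 : (1:ℝ) ≤ ‖x‖ := le_trans hR1 hxR
    have habs : -|h 0| ≤ h 0 := neg_abs_le _
    have hyC : 0 ≤ ‖y‖ + C := by positivity
    have h4 : 2 * (‖y‖ + C + C + |h 0| + 1) * ‖x‖ ≤ σ * ‖x‖ * ‖x‖ := by
      nlinarith [norm_nonneg x]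
    have h5 : (0:ℝ) ≤ (C + |h 0| + 1) * (‖x‖ - 1) := by
      apply mul_nonneg (by positivity) (by linarith)
    have h6 : ‖x‖^2 = ‖x‖ * ‖x‖ := by ring
    have h7 : (‖y‖ + C + C + |h 0| + 1) * ‖x‖ ≤ σ / 2 * ‖x‖ ^ 2 := by
      rw [h6]; nlinarith
    have h8 : h x ≤ C - (C + |h 0| + 1) * ‖x‖ := by
      have e3 := h3
      have e7 := h7
      ring_nf at e3 e7 ⊢
      linarith
    have h9 : h x ≤ - |h 0| - 1 := by
      have h5' := h5
      ring_nf at h5' h8 ⊢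
      linarith
    nlinarith [abs_nonneg (h 0)]
  obtain ⟨m, hmball, hmmax⟩ := (isCompact_closedBall (0:Fd) R).exists_isMaxOn
    ⟨0, by simp; linarith⟩ hhcont.continuousOn
  refine ⟨m, fun x => ?_⟩
  by_cases hx : ‖x‖ ≤ R
  · exact hmmax (by simpa [Metric.mem_closedBall, dist_eq_norm] using hx)
  · push_neg at hx
    exact le_trans (hout x hx).le (hmmax (by simp; linarith))

/-- Strong version: the maximizer dominates with a quadratic gap. -/
lemma exists_fenchel_max_strong (f : Fd → ℝ) (σ : ℝ) (hσ : 0 < σ)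
    (hf : StrongConvexOn Set.univ σ f) (y : Fd) :
    ∃ m : Fd, ∀ x : Fd,
      (inner ℝ x y : ℝ) - f x ≤ ((inner ℝ m y : ℝ) - f m) - σ / 4 * ‖x - m‖ ^ 2 := by
  obtain ⟨m, hm⟩ := exists_fenchel_max f σ hσ hf y
  refine ⟨m, fun x => ?_⟩
  have hmid := hf.2 (Set.mem_univ x) (Set.mem_univ m)
    (by norm_num : (0:ℝ) ≤ 1/2) (by norm_num : (0:ℝ) ≤ 1/2) (by norm_num)
  set z : Fd := (1/2 : ℝ) • x + (1/2 : ℝ) • m with hz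
  have hmz := hm z
  have hiz : (inner ℝ z y : ℝ) = 1/2 * (inner ℝ x y : ℝ) + 1/2 * (inner ℝ m y : ℝ) := by
    rw [hz, inner_add_left, real_inner_smul_left, real_inner_smul_left]
  simp only [smul_eq_mul] at hmid
  nlinarith [hmid, hmz, hiz]

/-- Main smoothness package for the Fenchel conjugate of a strongly convex function. -/
lemma fenchel_smooth (f : Fd → ℝ) (σ : ℝ) (hσ : 0 < σ)
    (hf : StrongConvexOn Set.univ σ f) :
    ∃ M : Fd → Fd, (∀ y, HasGradientAt (fenchel f) (M y) y) ∧
      ∀ y y', ‖M y - M y'‖ ≤ 2 / σ * ‖y - y'‖ := by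
  choose M hM using exists_fenchel_max_strong f σ hσ hf
  -- the value of the conjugate
  have hbdd : ∀ y, BddAbove (Set.range fun x : Fd => (inner ℝ x y : ℝ) - f x) := by
    intro y
    refine ⟨(inner ℝ (M y) y : ℝ) - f (M y), ?_⟩
    rintro _ ⟨x, rfl⟩
    simp only []
    have := hM y x
    nlinarith [sq_nonneg ‖x - M y‖]
  have hval : ∀ y, fenchel f y = (inner ℝ (M y) y : ℝ) - f (M y) := by
    intro y
    apply le_antisymm
    · apply ciSup_le
      intro x
      have := hM y x
      nlinarith [sq_nonneg ‖x - M y‖]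
    · exact le_ciSup (hbdd y) (M y)
  -- quadratic upper bound
  have hupper : ∀ y y' : Fd, fenchel f y' ≤ fenchel f y + (inner ℝ (M y) (y' - y) : ℝ)
      + σ⁻¹ * ‖y' - y‖ ^ 2 := by
    intro y y'
    rw [hval y', hval y]
    have key : ∀ x : Fd, (inner ℝ x y' : ℝ) - f x ≤ ((inner ℝ (M y) y : ℝ) - f (M y))
        + (inner ℝ (M y) (y' - y) : ℝ) + σ⁻¹ * ‖y' - y‖ ^ 2 := by
      intro x
      have h1 := hM y x
      have h2 : (inner ℝ x y' : ℝ) = (inner ℝ x y : ℝ) + (inner ℝ (M y) (y' - y) : ℝ)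
          + (inner ℝ (x - M y) (y' - y) : ℝ) := by
        rw [inner_sub_left, inner_sub_right, inner_sub_right]; ring
      have h3 : (inner ℝ (x - M y) (y' - y) : ℝ) ≤ ‖x - M y‖ * ‖y' - y‖ :=
        real_inner_le_norm _ _
      have h4 : ‖x - M y‖ * ‖y' - y‖ ≤ σ / 4 * ‖x - M y‖ ^ 2 + σ⁻¹ * ‖y' - y‖ ^ 2 := by
        have hinv : σ * σ⁻¹ = 1 := mul_inv_cancel₀ hσ.ne'
        nlinarith [sq_nonneg (σ / 2 * ‖x - M y‖ - ‖y' - y‖), sq_nonneg ‖x - M y‖,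
          sq_nonneg ‖y' - y‖, hσ, mul_pos hσ hσ]
      linarith
    have := key (M y')
    linarith
  -- lower bound
  have hlower : ∀ y y' : Fd, fenchel f y + (inner ℝ (M y) (y' - y) : ℝ) ≤ fenchel f y' := by
    intro y y'
    rw [hval y, hval y']
    have h1 := hM y' (M y)
    have h2 : (inner ℝ (M y) y' : ℝ) = (inner ℝ (M y) y : ℝ) + (inner ℝ (M y) (y' - y) : ℝ) := by
      rw [inner_sub_right]; ring
    nlinarith [sq_nonneg ‖M y - M y'‖]
  refine ⟨M, fun y => ?_, fun y y' => ?_⟩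
  · rw [hasGradientAt_iff_isLittleO]
    rw [Asymptotics.isLittleO_iff]
    intro c hc
    have hball : Metric.ball y (c * σ) ∈ nhds y := Metric.ball_mem_nhds y (by positivity)
    filter_upwards [hball] with y' hy'
    rw [Metric.mem_ball, dist_eq_norm] at hy'
    have hu := hupper y y'
    have hl := hlower y y'
    have habs : |fenchel f y' - fenchel f y - (inner ℝ (M y) (y' - y) : ℝ)|
        ≤ σ⁻¹ * ‖y' - y‖ ^ 2 := by
      rw [abs_le]
      constructor <;> nlinarith [sq_nonneg ‖y' - y‖]
    rw [Real.norm_eq_abs]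
    calc |fenchel f y' - fenchel f y - (inner ℝ (M y) (y' - y) : ℝ)|
        ≤ σ⁻¹ * ‖y' - y‖ ^ 2 := habs
      _ ≤ c * ‖y' - y‖ := by
          rw [sq]
          rw [← mul_assoc]
          apply mul_le_mul_of_nonneg_right _ (norm_nonneg _)
          rw [inv_mul_le_iff₀ hσ] -- σ⁻¹ * ‖y'-y‖ ≤ c ↔ ‖y'-y‖ ≤ c * σ... check
          linarith
  · -- Lipschitz
    have h1 := hM y (M y')
    have h2 := hM y' (M y)
    have h3 : σ / 2 * ‖M y - M y'‖ ^ 2 ≤ (inner ℝ (M y - M y') (y - y') : ℝ) := by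
      have e1 : (inner ℝ (M y - M y') (y - y') : ℝ)
          = ((inner ℝ (M y) y : ℝ) - (inner ℝ (M y') y : ℝ))
            + ((inner ℝ (M y') y' : ℝ) - (inner ℝ (M y) y' : ℝ)) := by
        rw [inner_sub_left, inner_sub_right, inner_sub_right]; ring
      have e2 : ‖M y' - M y‖ = ‖M y - M y'‖ := norm_sub_rev _ _
      rw [e2] at h1
      linarith
    have h4 : (inner ℝ (M y - M y') (y - y') : ℝ) ≤ ‖M y - M y'‖ * ‖y - y'‖ :=
      real_inner_le_norm _ _
    by_cases hz : ‖M y - M y'‖ = 0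
    · rw [hz]; positivity
    · have hzp : 0 < ‖M y - M y'‖ := lt_of_le_of_ne (norm_nonneg _) (Ne.symm hz)
      rw [div_mul_eq_mul_div, le_div_iff₀ hσ]
      nlinarith

end aux

theorem dual_block_gradient_local_lipschitz
    {V E : Type*} [Fintype V] [Fintype E] [DecidableEq V] [DecidableEq E]
    (d : ℕ) (σ : ℝ) (hσ : 0 < σ)
    (ep1 ep2 : E → V) (hloop : ∀ e, ep1 e ≠ ep2 e)
    (μ : E → ℝ) (hμ : ∀ e, μ e ≠ 0)
    (A : Matrix V E ℝ)
    (hA : ∀ e i, A i e = μ e * ((if i = ep1 e then 1 else 0) - (if i = ep2 e then 1 else 0)))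
    (f : V → EuclideanSpace ℝ (Fin d) → ℝ)
    (hsc : ∀ i, StrongConvexOn Set.univ σ (f i))
    (FAstar : PiLp 2 (fun _ : E => EuclideanSpace ℝ (Fin d)) → ℝ)
    (hFAstar : ∀ lam, FAstar lam = ∑ i, fenchel (f i) (∑ e, A i e • lam e))
    (e : E) :
    ∀ lam lam' : PiLp 2 (fun _ : E => EuclideanSpace ℝ (Fin d)),
      ‖(gradient FAstar lam) e - (gradient FAstar lam') e‖ ≤
        ∑ e' ∈ univ.filter (fun e' =>
            ep1 e' = ep1 e ∨ ep1 e' = ep2 e ∨ ep2 e' = ep1 e ∨ ep2 e' = ep2 e),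
          Real.sqrt ((4 * μ e ^ 2 * σ⁻¹) * (4 * μ e' ^ 2 * σ⁻¹)) * ‖lam e' - lam' e'‖ := by
  classical
  have hBlin : ∀ i : V, ∃ B : PiLp 2 (fun _ : E => EuclideanSpace ℝ (Fin d)) →L[ℝ] EuclideanSpace ℝ (Fin d), ∀ lam : PiLp 2 (fun _ : E => EuclideanSpace ℝ (Fin d)), B lam = ∑ e', A i e' • lam e' := by
    intro i
    haveI : ContinuousSMul ℝ (PiLp 2 (fun _ : E => EuclideanSpace ℝ (Fin d))) := IsBoundedSMul.continuousSMul
    refine ⟨LinearMap.toContinuousLinearMap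
      { toFun := fun lam : PiLp 2 (fun _ : E => EuclideanSpace ℝ (Fin d)) => ∑ e', A i e' • lam e'
        map_add' := by
          intro a b
          rw [← Finset.sum_add_distrib]
          exact Finset.sum_congr rfl fun e' _ => by
            show A i e' • (a e' + b e') = _
            rw [smul_add]
        map_smul' := by
          intro c a
          rw [RingHom.id_apply, Finset.smul_sum]
          exact Finset.sum_congr rfl fun e' _ => by
            show A i e' • (c • a e') = _
            rw [smul_comm] }, fun lam => rfl⟩
  choose B hB using hBlin
  choose M hMgrad hMlip using fun i => fenchel_smooth (f i) σ hσ (hsc i)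
  have hFeq : FAstar = fun lam => ∑ i, fenchel (f i) (B i lam) := by
    funext lam
    rw [hFAstar]
    exact Finset.sum_congr rfl fun i _ => by rw [hB]
  set G : PiLp 2 (fun _ : E => EuclideanSpace ℝ (Fin d)) → PiLp 2 (fun _ : E => EuclideanSpace ℝ (Fin d)) := fun lam => WithLp.toLp 2 (fun e' => ∑ i, A i e' • M i (B i lam) : ∀ _ : E, EuclideanSpace ℝ (Fin d)) with hG
  have hGrad : ∀ lam, HasGradientAt FAstar (G lam) lam := by
    intro lam
    have hsum : HasFDerivAt FAstar
        (∑ i, (InnerProductSpace.toDual ℝ (EuclideanSpace ℝ (Fin d)) (M i (B i lam)) : EuclideanSpace ℝ (Fin d) →L[ℝ] ℝ).comp (B i)) lam := by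
      rw [hFeq]
      apply HasFDerivAt.fun_sum
      intro i _
      exact ((hasGradientAt_iff_hasFDerivAt.mp (hMgrad i (B i lam))).comp lam
        (B i).hasFDerivAt)
    rw [hasGradientAt_iff_hasFDerivAt]
    refine HasFDerivAt.congr_fderiv hsum (Eq.symm ?_)
    apply ContinuousLinearMap.ext
    intro v
    rw [InnerProductSpace.toDual_apply_apply, ContinuousLinearMap.sum_apply]
    have lhs : (inner ℝ (G lam) v : ℝ) = ∑ e', (inner ℝ ((G lam) e') (v e') : ℝ) :=
      PiLp.inner_apply _ _
    rw [lhs]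
    have key : ∀ e', (inner ℝ ((G lam) e') (v e') : ℝ)
        = ∑ i, A i e' * (inner ℝ (M i (B i lam)) (v e') : ℝ) := by
      intro e'
      have : (G lam) e' = ∑ i, A i e' • M i (B i lam) := rfl
      rw [this, sum_inner]
      exact Finset.sum_congr rfl fun i _ => real_inner_smul_left _ _ _
    rw [Finset.sum_congr rfl fun e' _ => key e', Finset.sum_comm]
    apply Finset.sum_congr rfl
    intro i _
    rw [ContinuousLinearMap.comp_apply, InnerProductSpace.toDual_apply_apply, hB i v, inner_sum]
    exact Finset.sum_congr rfl fun e' _ => (real_inner_smul_right _ _ _).symm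
  intro lam lam'
  rw [(hGrad lam).gradient, (hGrad lam').gradient]
  have habs : ∀ (i : V) (e'' : E),
      |A i e''| = if i = ep1 e'' ∨ i = ep2 e'' then |μ e''| else 0 := by
    intro i e''
    rw [hA]
    by_cases h1 : i = ep1 e'' <;> by_cases h2 : i = ep2 e''
    · exact absurd (h1 ▸ h2) (hloop e'')
    · simp [h1, h2, abs_mul, hloop e'']
    · simp [h1, h2, abs_mul, Ne.symm (hloop e'')]
    · simp [h1, h2]
  have hDm : ∀ i : V, ‖M i (B i lam) - M i (B i lam')‖
      ≤ 2 / σ * ∑ e', |A i e'| * ‖lam e' - lam' e'‖ := by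
    intro i
    refine le_trans (hMlip i _ _) ?_
    apply mul_le_mul_of_nonneg_left _ (by positivity)
    calc ‖B i lam - B i lam'‖ = ‖∑ e', A i e' • (lam e' - lam' e')‖ := by
          rw [← map_sub, hB]
          exact congrArg _ (Finset.sum_congr rfl fun e' _ => by
            show A i e' • (lam e' - lam' e') = _
            rfl)
      _ ≤ ∑ e', ‖A i e' • (lam e' - lam' e')‖ := norm_sum_le _ _
      _ = ∑ e', |A i e'| * ‖lam e' - lam' e'‖ :=
          Finset.sum_congr rfl fun e' _ => by rw [norm_smul, Real.norm_eq_abs]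
  have step1 : ‖(G lam) e - (G lam') e‖
      ≤ ∑ i, |A i e| * (2 / σ * ∑ e', |A i e'| * ‖lam e' - lam' e'‖) := by
    have hGe : (G lam) e - (G lam') e = ∑ i, A i e • (M i (B i lam) - M i (B i lam')) := by
      show (∑ i, A i e • M i (B i lam)) - (∑ i, A i e • M i (B i lam')) = _
      rw [← Finset.sum_sub_distrib]
      exact Finset.sum_congr rfl fun i _ => (smul_sub _ _ _).symm
    rw [hGe]
    refine le_trans (norm_sum_le _ _) ?_
    apply Finset.sum_le_sum
    intro i _
    rw [norm_smul, Real.norm_eq_abs]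
    exact mul_le_mul_of_nonneg_left (hDm i) (abs_nonneg _)
  refine le_trans step1 ?_
  have step2 : ∑ i, |A i e| * (2 / σ * ∑ e', |A i e'| * ‖lam e' - lam' e'‖)
      = ∑ e' : E, (2 / σ * ∑ i, |A i e| * |A i e'|) * ‖lam e' - lam' e'‖ := by
    simp_rw [Finset.mul_sum]
    rw [Finset.sum_comm]
    apply Finset.sum_congr rfl
    intro e' _
    rw [Finset.sum_mul]
    apply Finset.sum_congr rfl
    intro i _
    ring
  rw [step2]
  have hAle : ∀ (i : V) (e'' : E), |A i e''| ≤ |μ e''| := by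
    intro i e''
    rw [habs]
    split
    · exact le_refl _
    · exact abs_nonneg _
  have hcle : ∀ e' : E, ∑ i, |A i e| * |A i e'| ≤ 2 * (|μ e| * |μ e'|) := by
    intro e'
    have hsub : ∑ i, |A i e| * |A i e'|
        = ∑ i ∈ ({ep1 e, ep2 e} : Finset V), |A i e| * |A i e'| := by
      symm
      apply Finset.sum_subset (Finset.subset_univ _)
      intro i _ hi
      simp only [Finset.mem_insert, Finset.mem_singleton] at hi
      push_neg at hi
      have : |A i e| = 0 := by
        rw [habs]
        simp [hi.1, hi.2]
      rw [this, zero_mul]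
    rw [hsub, Finset.sum_pair (hloop e)]
    have h1 : |A (ep1 e) e| ≤ |μ e| := hAle _ _
    have h2 : |A (ep2 e) e| ≤ |μ e| := hAle _ _
    have h3 : |A (ep1 e) e'| ≤ |μ e'| := hAle _ _
    have h4 : |A (ep2 e) e'| ≤ |μ e'| := hAle _ _
    nlinarith [abs_nonneg (A (ep1 e) e), abs_nonneg (A (ep2 e) e),
      abs_nonneg (A (ep1 e) e'), abs_nonneg (A (ep2 e) e'),
      abs_nonneg (μ e), abs_nonneg (μ e')]
  have hsqrt : ∀ e' : E, Real.sqrt ((4 * μ e ^ 2 * σ⁻¹) * (4 * μ e' ^ 2 * σ⁻¹))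
      = 4 * (|μ e| * |μ e'|) * σ⁻¹ := by
    intro e'
    have : (4 * μ e ^ 2 * σ⁻¹) * (4 * μ e' ^ 2 * σ⁻¹) = (4 * (|μ e| * |μ e'|) * σ⁻¹) ^ 2 := by
      have he : |μ e| ^ 2 = μ e ^ 2 := sq_abs _
      have he' : |μ e'| ^ 2 = μ e' ^ 2 := sq_abs _
      rw [← he, ← he']
      ring
    rw [this, Real.sqrt_sq (by positivity)]
  -- restrict the sum to the filter
  have hvanish : ∀ e' ∈ (univ : Finset E), e' ∉ univ.filter (fun e' =>
      ep1 e' = ep1 e ∨ ep1 e' = ep2 e ∨ ep2 e' = ep1 e ∨ ep2 e' = ep2 e) →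
      (2 / σ * ∑ i, |A i e| * |A i e'|) * ‖lam e' - lam' e'‖ = 0 := by
    intro e' _ he'
    simp only [Finset.mem_filter, Finset.mem_univ, true_and] at he'
    push_neg at he'
    obtain ⟨n1, n2, n3, n4⟩ := he'
    have hc0 : ∑ i, |A i e| * |A i e'| = 0 := by
      apply Finset.sum_eq_zero
      intro i _
      rcases eq_or_ne i (ep1 e) with h | h
      · have : |A i e'| = 0 := by
          rw [habs]
          have k1 : i ≠ ep1 e' := by rw [h]; exact fun hh => n1 hh.symm
          have k2 : i ≠ ep2 e' := by rw [h]; exact fun hh => n3 hh.symm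
          simp [k1, k2]
        rw [this, mul_zero]
      rcases eq_or_ne i (ep2 e) with h2 | h2
      · have : |A i e'| = 0 := by
          rw [habs]
          have k1 : i ≠ ep1 e' := by rw [h2]; exact fun hh => n2 hh.symm
          have k2 : i ≠ ep2 e' := by rw [h2]; exact fun hh => n4 hh.symm
          simp [k1, k2]
        rw [this, mul_zero]
      · have : |A i e| = 0 := by
          rw [habs]
          simp [h, h2]
        rw [this, zero_mul]
    rw [hc0, mul_zero, zero_mul]
  rw [← Finset.sum_subset (Finset.filter_subset _ _) hvanish]
  apply Finset.sum_le_sum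
  intro e' _
  apply mul_le_mul_of_nonneg_right _ (norm_nonneg _)
  rw [hsqrt e']
  have := hcle e'
  have hσi : 0 < σ⁻¹ := by positivity
  calc 2 / σ * ∑ i, |A i e| * |A i e'| ≤ 2 / σ * (2 * (|μ e| * |μ e'|)) := by
        apply mul_le_mul_of_nonneg_left this (by positivity)
    _ = 4 * (|μ e| * |μ e'|) * σ⁻¹ := by
        rw [div_eq_mul_inv]
        ring
end
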